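/- Let Λ be a g-frame for H with bounds A_Λ, B_Λ, and suppose there exists μ ∈ [0, A_Λ²/B_Λ) such that ∑_i ‖(m_i Θ_i − Λ_i)f‖² ≤ μ‖f‖² for all f ∈ H. Then mΘ = {m_i Θ_i} is a g-frame for H, the multiplier M_{m,Λ,Θ} is invertible on H, and ‖h‖/(B_Λ + √(μ B_Λ)) ≤ ‖M_{m,Λ,Θ}^{-1} h‖ ≤ ‖h‖/(A_Λ − √(μ B_Λ)) for all h ∈ H. -/

import Mathlib

open ContinuousLinearMap
local notation "⟪" x ", " y "⟫" => @inner ℂ _ _ x y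

private lemma l2CS {J : Type*} {a b : J → ℝ} (ha : ∀ i, 0 ≤ a i) (hb : ∀ i, 0 ≤ b i)
    {s t : ℝ} (hs : HasSum (fun i => a i ^ 2) s) (ht : HasSum (fun i => b i ^ 2) t) :
    Summable (fun i => a i * b i) ∧ ∑' i, a i * b i ≤ Real.sqrt s * Real.sqrt t := by
  have hsum : Summable (fun i => a i * b i) := by
    apply Summable.of_nonneg_of_le (fun i => mul_nonneg (ha i) (hb i)) (fun i => ?_)
      ((hs.summable.add ht.summable).div_const 2)
    nlinarith [sq_nonneg (a i - b i)]
  refine ⟨hsum, hsum.tsum_le_of_sum_le fun F => ?_⟩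
  calc ∑ i ∈ F, a i * b i
      ≤ Real.sqrt (∑ i ∈ F, a i ^ 2) * Real.sqrt (∑ i ∈ F, b i ^ 2) :=
        Real.sum_mul_le_sqrt_mul_sqrt F a b
    _ ≤ Real.sqrt s * Real.sqrt t := by
        gcongr <;> [exact sum_le_hasSum F (fun i _ => sq_nonneg _) hs;
          exact sum_le_hasSum F (fun i _ => sq_nonneg _) ht]

private lemma l2inner {J : Type*} {Hi : J → Type*} [∀ i, NormedAddCommGroup (Hi i)]
    [∀ i, InnerProductSpace ℂ (Hi i)] (x y : ∀ i, Hi i) {s t : ℝ}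
    (hx : HasSum (fun i => ‖x i‖ ^ 2) s) (hy : HasSum (fun i => ‖y i‖ ^ 2) t) :
    Summable (fun i => (⟪x i, y i⟫ : ℂ)) ∧
      ‖∑' i, (⟪x i, y i⟫ : ℂ)‖ ≤ Real.sqrt s * Real.sqrt t := by
  obtain ⟨hsum, hle⟩ := l2CS (fun i => norm_nonneg (x i)) (fun i => norm_nonneg (y i)) hx hy
  have hsum2 : Summable fun i => (⟪x i, y i⟫ : ℂ) :=
    Summable.of_norm_bounded hsum fun i => norm_inner_le_norm _ _
  refine ⟨hsum2, le_trans (norm_tsum_le_tsum_norm (hsum2.norm)) ?_⟩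
  exact le_trans (Summable.tsum_le_tsum (fun i => norm_inner_le_norm _ _) hsum2.norm hsum) hle

private lemma l2tri {J : Type*} {Hi : J → Type*} [∀ i, NormedAddCommGroup (Hi i)]
    (x y : ∀ i, Hi i) {s t : ℝ}
    (hx : HasSum (fun i => ‖x i‖ ^ 2) s) (hy : HasSum (fun i => ‖y i‖ ^ 2) t) :
    Summable (fun i => ‖x i + y i‖ ^ 2) ∧
      ∑' i, ‖x i + y i‖ ^ 2 ≤ (Real.sqrt s + Real.sqrt t) ^ 2 := by
  obtain ⟨hsum, hle⟩ := l2CS (fun i => norm_nonneg (x i)) (fun i => norm_nonneg (y i)) hx hy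
  have hterm : ∀ i, ‖x i + y i‖ ^ 2 ≤ ‖x i‖ ^ 2 + 2 * (‖x i‖ * ‖y i‖) + ‖y i‖ ^ 2 := by
    intro i
    have := norm_add_le (x i) (y i)
    nlinarith [norm_nonneg (x i + y i), norm_nonneg (x i), norm_nonneg (y i)]
  have hsum3 : Summable fun i => ‖x i‖ ^ 2 + 2 * (‖x i‖ * ‖y i‖) + ‖y i‖ ^ 2 :=
    (hx.summable.add ((hsum.mul_left 2))).add hy.summable
  have hsum4 : Summable fun i => ‖x i + y i‖ ^ 2 :=
    Summable.of_nonneg_of_le (fun i => sq_nonneg _) hterm hsum3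
  refine ⟨hsum4, le_trans (Summable.tsum_le_tsum hterm hsum4 hsum3) ?_⟩
  have h0s : 0 ≤ s := hx.nonneg fun i => sq_nonneg _
  have h0t : 0 ≤ t := hy.nonneg fun i => sq_nonneg _
  have heq : ∑' i, (‖x i‖ ^ 2 + 2 * (‖x i‖ * ‖y i‖) + ‖y i‖ ^ 2)
      = s + 2 * (∑' i, ‖x i‖ * ‖y i‖) + t := by
    rw [Summable.tsum_add (hx.summable.add (hsum.mul_left 2)) hy.summable,
      Summable.tsum_add hx.summable (hsum.mul_left 2), hx.tsum_eq, hy.tsum_eq, tsum_mul_left]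
  rw [heq]
  nlinarith [Real.sq_sqrt h0s, Real.sq_sqrt h0t, Real.sqrt_nonneg s, Real.sqrt_nonneg t,
    (tsum_nonneg fun i => mul_nonneg (norm_nonneg (x i)) (norm_nonneg (y i)) : 0 ≤ ∑' i, ‖x i‖ * ‖y i‖)]

private lemma hasSum_inner_left' {J : Type*} {H : Type*} [NormedAddCommGroup H]
    [InnerProductSpace ℂ H] {x : J → H} {a : H} (h : HasSum x a) (g : H) :
    HasSum (fun i => (⟪x i, g⟫ : ℂ)) ⟪a, g⟫ := by
  have h1 : HasSum (fun i => (⟪g, x i⟫ : ℂ)) ⟪g, a⟫ := (innerSL ℂ g).hasSum h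
  simpa only [inner_conj_symm, RCLike.star_def] using h1.star

set_option maxHeartbeats 1000000 in
theorem stmt11 {H : Type*} [NormedAddCommGroup H] [InnerProductSpace ℂ H] [CompleteSpace H]
    {J : Type*} {Hi : J → Type*} [∀ i, NormedAddCommGroup (Hi i)]
    [∀ i, InnerProductSpace ℂ (Hi i)] [∀ i, CompleteSpace (Hi i)]
    (Λ Θ : ∀ i, H →L[ℂ] Hi i) (m : J → ℂ) (AΛ BΛ μ : ℝ) (hAΛ : 0 < AΛ)
    (hΛ : ∀ f : H, ∃ s : ℝ, HasSum (fun i => ‖Λ i f‖ ^ 2) s ∧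
      AΛ * ‖f‖ ^ 2 ≤ s ∧ s ≤ BΛ * ‖f‖ ^ 2)
    (hμ0 : 0 ≤ μ) (hμ : μ < AΛ ^ 2 / BΛ)
    (hperturb : ∀ f : H, ∃ s : ℝ,
      HasSum (fun i => ‖m i • Θ i f - Λ i f‖ ^ 2) s ∧ s ≤ μ * ‖f‖ ^ 2)
    (M : H →L[ℂ] H)
    (hM : ∀ f : H, HasSum (fun i => m i • adjoint (Λ i) (Θ i f)) (M f)) :
    (∃ A B : ℝ, 0 < A ∧ ∀ f : H, ∃ s : ℝ,
      HasSum (fun i => ‖m i‖ ^ 2 * ‖Θ i f‖ ^ 2) s ∧ A * ‖f‖ ^ 2 ≤ s ∧ s ≤ B * ‖f‖ ^ 2) ∧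
    ∃ Minv : H →L[ℂ] H, M * Minv = 1 ∧ Minv * M = 1 ∧
      ∀ h : H, ‖h‖ / (BΛ + Real.sqrt (μ * BΛ)) ≤ ‖Minv h‖ ∧
        ‖Minv h‖ ≤ ‖h‖ / (AΛ - Real.sqrt (μ * BΛ)) := by
  -- positivity of BΛ
  have hBΛ : 0 < BΛ := by
    rcases lt_trichotomy BΛ 0 with h | h | h
    · have : AΛ ^ 2 / BΛ < 0 := div_neg_of_pos_of_neg (pow_pos hAΛ 2) h
      linarith
    · rw [h, div_zero] at hμ; linarith
    · exact h
  have hμB : μ * BΛ < AΛ ^ 2 := (lt_div_iff₀ hBΛ).mp hμ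
  have hsqlt : Real.sqrt (μ * BΛ) < AΛ := by
    have := Real.sqrt_lt_sqrt (mul_nonneg hμ0 hBΛ.le) hμB
    rwa [Real.sqrt_sq hAΛ.le] at this
  set c := AΛ - Real.sqrt (μ * BΛ) with hcdef
  set C := BΛ + Real.sqrt (μ * BΛ) with hCdef
  have hc : 0 < c := by simp only [hcdef]; linarith
  have hC : 0 < C := by positivity
  choose sΛ hsΛ hAle hBle using hΛ
  choose sd hsd hsdle using hperturb
  have hsΛnn : ∀ f, 0 ≤ sΛ f := fun f => (hsΛ f).nonneg fun i => sq_nonneg _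
  have hsdnn : ∀ f, 0 ≤ sd f := fun f => (hsd f).nonneg fun i => sq_nonneg _
  have hsqΛ : ∀ f : H, Real.sqrt (sΛ f) ≤ Real.sqrt BΛ * ‖f‖ := fun f => by
    have := Real.sqrt_le_sqrt (hBle f)
    rwa [Real.sqrt_mul hBΛ.le, Real.sqrt_sq (norm_nonneg f)] at this
  have hsqd : ∀ f : H, Real.sqrt (sd f) ≤ Real.sqrt μ * ‖f‖ := fun f => by
    have := Real.sqrt_le_sqrt (hsdle f)
    rwa [Real.sqrt_mul hμ0, Real.sqrt_sq (norm_nonneg f)] at this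
  -- sums for m • Θ
  have htri : ∀ f : H, Summable (fun i => ‖m i • Θ i f‖ ^ 2) ∧
      ∑' i, ‖m i • Θ i f‖ ^ 2 ≤ (Real.sqrt (sΛ f) + Real.sqrt (sd f)) ^ 2 := fun f => by
    have h := l2tri (fun i => Λ i f) (fun i => m i • Θ i f - Λ i f) (hsΛ f) (hsd f)
    simpa using h
  set smΘ : H → ℝ := fun f => ∑' i, ‖m i • Θ i f‖ ^ 2 with hsmΘdef
  have hsmΘ : ∀ f, HasSum (fun i => ‖m i • Θ i f‖ ^ 2) (smΘ f) := fun f => (htri f).1.hasSum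
  have hsmΘnn : ∀ f, 0 ≤ smΘ f := fun f => (hsmΘ f).nonneg fun i => sq_nonneg _
  have hsqmΘ : ∀ f : H, Real.sqrt (smΘ f) ≤ (Real.sqrt BΛ + Real.sqrt μ) * ‖f‖ := fun f => by
    have h1 := Real.sqrt_le_sqrt (htri f).2
    rw [Real.sqrt_sq (by positivity)] at h1
    refine h1.trans ?_
    have := hsqΛ f; have := hsqd f
    nlinarith [Real.sqrt_nonneg (sΛ f), Real.sqrt_nonneg (sd f)]
  -- inner product identity
  have hMg : ∀ f g : H, HasSum (fun i => (⟪m i • Θ i f, Λ i g⟫ : ℂ)) ⟪M f, g⟫ := fun f g => by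
    have h1 := hasSum_inner_left' (hM f) g
    convert h1 using 2 with i
    rw [inner_smul_left, inner_smul_left, adjoint_inner_left]
  -- coercivity
  have hcoer : ∀ f : H, c * ‖f‖ ^ 2 ≤ (⟪M f, f⟫ : ℂ).re := fun f => by
    have h1 := hMg f f
    have h2 : HasSum (fun i => (⟪Λ i f, Λ i f⟫ : ℂ)) ((sΛ f : ℂ)) := by
      have h := (hsΛ f).mapL Complex.ofRealCLM
      convert h using 2 with i
      · rw [inner_self_eq_norm_sq_to_K]; simp
      · rfl
    obtain ⟨hdsum, hdle⟩ :=
      l2inner (fun i => m i • Θ i f - Λ i f) (fun i => Λ i f) (hsd f) (hsΛ f)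
    set z := ∑' i, (⟪m i • Θ i f - Λ i f, Λ i f⟫ : ℂ) with hzdef
    have h4 := h2.add hdsum.hasSum
    have h5 : (⟪M f, f⟫ : ℂ) = (sΛ f : ℂ) + z := by
      refine h1.unique ?_
      convert h4 using 2 with i
      rw [← inner_add_left, add_sub_cancel]
    have h6 : -‖z‖ ≤ z.re := neg_abs_le z.re |>.trans' (by
      have := Complex.abs_re_le_norm z
      linarith)
    have h7 : ‖z‖ ≤ Real.sqrt (μ * BΛ) * ‖f‖ ^ 2 := by
      refine hdle.trans ?_
      calc Real.sqrt (sd f) * Real.sqrt (sΛ f)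
          ≤ (Real.sqrt μ * ‖f‖) * (Real.sqrt BΛ * ‖f‖) :=
            mul_le_mul (hsqd f) (hsqΛ f) (Real.sqrt_nonneg _) (by positivity)
        _ = Real.sqrt (μ * BΛ) * ‖f‖ ^ 2 := by rw [Real.sqrt_mul hμ0]; ring
    rw [h5]
    simp only [Complex.add_re, Complex.ofReal_re]
    have := hAle f
    simp only [hcdef]
    linarith
  -- lower norm bound
  have hlow : ∀ f : H, c * ‖f‖ ≤ ‖M f‖ := fun f => by
    have h1 := hcoer f
    have h2 : (⟪M f, f⟫ : ℂ).re ≤ ‖M f‖ * ‖f‖ := by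
      calc (⟪M f, f⟫ : ℂ).re ≤ ‖(⟪M f, f⟫ : ℂ)‖ := Complex.re_le_norm _
        _ ≤ ‖M f‖ * ‖f‖ := norm_inner_le_norm _ _
    by_cases hf : ‖f‖ = 0
    · rw [hf, mul_zero]; exact norm_nonneg _
    · have hfpos : 0 < ‖f‖ := lt_of_le_of_ne (norm_nonneg f) (Ne.symm hf)
      rw [← mul_le_mul_iff_of_pos_right hfpos]
      nlinarith
  -- upper norm bound
  have hup : ∀ f : H, ‖M f‖ ≤ C * ‖f‖ := fun f => by
    have h1 := hMg f (M f)
    obtain ⟨hbsum, hble⟩ :=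
      l2inner (fun i => m i • Θ i f) (fun i => Λ i (M f)) (hsmΘ f) (hsΛ (M f))
    have h2 : ‖(⟪M f, M f⟫ : ℂ)‖ = ‖M f‖ ^ 2 := by
      rw [inner_self_eq_norm_sq_to_K]
      simp
    have h3 : ‖M f‖ ^ 2 ≤ Real.sqrt (smΘ f) * Real.sqrt (sΛ (M f)) := by
      rw [← h2, ← h1.tsum_eq]; exact hble
    have h4 : ‖M f‖ ^ 2 ≤ ((Real.sqrt BΛ + Real.sqrt μ) * ‖f‖) * (Real.sqrt BΛ * ‖M f‖) := by
      refine h3.trans (mul_le_mul (hsqmΘ f) (hsqΛ (M f)) (Real.sqrt_nonneg _) (by positivity))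
    have hCeq : C = (Real.sqrt BΛ + Real.sqrt μ) * Real.sqrt BΛ := by
      simp only [hCdef]
      rw [add_mul, Real.mul_self_sqrt hBΛ.le, Real.sqrt_mul hμ0, mul_comm (Real.sqrt μ)]
    by_cases hMf : ‖M f‖ = 0
    · rw [hMf]; positivity
    · have hMfpos : 0 < ‖M f‖ := lt_of_le_of_ne (norm_nonneg _) (Ne.symm hMf)
      rw [← mul_le_mul_iff_of_pos_right hMfpos, hCeq]
      nlinarith
  constructor
  · -- g-frame for mΘ
    refine ⟨c ^ 2 / BΛ, (Real.sqrt BΛ + Real.sqrt μ) ^ 2, by positivity, fun f => ?_⟩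
    refine ⟨smΘ f, ?_, ?_, ?_⟩
    · have := hsmΘ f
      convert this using 2 with i
      rw [norm_smul, mul_pow]
    · -- lower frame bound
      have h1 := hcoer f
      have h2 : (⟪M f, f⟫ : ℂ).re ≤ Real.sqrt (smΘ f) * Real.sqrt (sΛ f) := by
        obtain ⟨hbsum, hble⟩ :=
          l2inner (fun i => m i • Θ i f) (fun i => Λ i f) (hsmΘ f) (hsΛ f)
        calc (⟪M f, f⟫ : ℂ).re ≤ ‖(⟪M f, f⟫ : ℂ)‖ := Complex.re_le_norm _
          _ = ‖∑' i, (⟪m i • Θ i f, Λ i f⟫ : ℂ)‖ := by rw [(hMg f f).tsum_eq]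
          _ ≤ _ := hble
      by_cases hf : ‖f‖ = 0
      · rw [hf]; simpa using hsmΘnn f
      · have hfpos : 0 < ‖f‖ := lt_of_le_of_ne (norm_nonneg f) (Ne.symm hf)
        have h3 : c * ‖f‖ ≤ Real.sqrt (smΘ f) * Real.sqrt BΛ := by
          have h4 : Real.sqrt (smΘ f) * Real.sqrt (sΛ f)
              ≤ Real.sqrt (smΘ f) * (Real.sqrt BΛ * ‖f‖) :=
            mul_le_mul_of_nonneg_left (hsqΛ f) (Real.sqrt_nonneg _)
          have h5 : c * ‖f‖ * ‖f‖ ≤ Real.sqrt (smΘ f) * Real.sqrt BΛ * ‖f‖ := by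
            nlinarith
          exact le_of_mul_le_mul_right h5 hfpos
        rw [div_mul_eq_mul_div, div_le_iff₀ hBΛ]
        have h6 := pow_le_pow_left₀ (by positivity : (0:ℝ) ≤ c * ‖f‖) h3 2
        rw [mul_pow, mul_pow, Real.sq_sqrt (hsmΘnn f), Real.sq_sqrt hBΛ.le] at h6
        linarith
    · -- upper frame bound
      refine (htri f).2.trans ?_
      have := hsqΛ f; have := hsqd f
      nlinarith [Real.sqrt_nonneg (sΛ f), Real.sqrt_nonneg (sd f), norm_nonneg f,
        Real.sqrt_nonneg BΛ, Real.sqrt_nonneg μ]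
  · -- invertibility
    have hker : LinearMap.ker (M : H →ₗ[ℂ] H) = ⊥ := by
      rw [LinearMap.ker_eq_bot']
      intro x hx
      have h := hlow x
      rw [show M x = 0 from hx, norm_zero] at h
      have : ‖x‖ = 0 := le_antisymm (by nlinarith) (norm_nonneg x)
      exact norm_eq_zero.mp this
    have hanti : AntilipschitzWith (⟨c, hc.le⟩ : NNReal)⁻¹ M := by
      refine M.antilipschitz_of_bound fun x => ?_
      change ‖x‖ ≤ c⁻¹ * ‖M x‖
      have h := hlow x
      calc ‖x‖ = c⁻¹ * (c * ‖x‖) := by field_simp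
        _ ≤ c⁻¹ * ‖M x‖ := by gcongr
    have hclosed : IsClosed ((LinearMap.range (M : H →ₗ[ℂ] H) : Submodule ℂ H) : Set H) := by
      have h := hanti.isClosed_range M.uniformContinuous
      convert h using 1
      exact LinearMap.coe_range _
    haveI : CompleteSpace (LinearMap.range (M : H →ₗ[ℂ] H) : Submodule ℂ H) := hclosed.completeSpace_coe
    have hrange : LinearMap.range (M : H →ₗ[ℂ] H) = ⊤ := by
      rw [← Submodule.orthogonal_eq_bot_iff, Submodule.eq_bot_iff]
      intro x hx
      have h0 : (⟪M x, x⟫ : ℂ) = 0 :=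
        (Submodule.mem_orthogonal _ x).mp hx (M x) ⟨x, rfl⟩
      have h := hcoer x
      rw [h0] at h
      simp only [Complex.zero_re] at h
      have hx2 : ‖x‖ ^ 2 = 0 := le_antisymm (by nlinarith) (sq_nonneg _)
      have : ‖x‖ = 0 := pow_eq_zero_iff two_ne_zero |>.mp hx2
      exact norm_eq_zero.mp this
    set e := ContinuousLinearEquiv.ofBijective M hker hrange with hedef
    have heM : ∀ x, e x = M x := fun x => rfl
    refine ⟨e.symm.toContinuousLinearMap, ?_, ?_, fun h => ?_⟩
    · ext x
      show M (e.symm x) = x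
      rw [← heM]; exact e.apply_symm_apply x
    · ext x
      show e.symm (M x) = x
      rw [← heM]; exact e.symm_apply_apply x
    · have hMu : M (e.symm h) = h := by rw [← heM]; exact e.apply_symm_apply h
      constructor
      · rw [div_le_iff₀ hC]
        have h1 := hup (e.symm h)
        rw [hMu] at h1
        show ‖h‖ ≤ ‖e.symm h‖ * C
        rw [mul_comm]
        exact h1
      · rw [le_div_iff₀ hc]
        have h1 := hlow (e.symm h)
        rw [hMu] at h1
        show ‖e.symm h‖ * c ≤ ‖h‖
        rw [mul_comm]
        exact h1
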